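/- arXiv:2411.03607 — 4 statements merged into one kernel-verified Lean document; each statement's English description precedes it below -/
import Mathlib

section
/- Let φ_v, v ∈ V, be a set of generalized barycentric coordinates on a simple non-degenerate convex d-polytope K (non-negative functions with ∑_v φ_v = 1 and ∑_v φ_v(x) v = x). Then for every x ∈ K, there are at most d facets of K whose distance to x is strictly less than h⋆/(d+1). -/
open scoped Classical

noncomputable section

/-- A combinatorial-geometric encoding of a simple convex `d`-dimensional polytope:
vertices `V`, and facets `F` given as pairs `(n, c)` of a unit outward normal and an offset,
so the facet hyperplane is `{x | ⟪n, x⟫ = c}` and `K` lies in `{x | ⟪n, x⟫ ≤ c}`.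
Simplicity: each vertex lies on exactly `d` facets; non-degeneracy: distinct facets
determine distinct hyperplanes (distinct `(n, c)` pairs in the `Finset`). -/
structure WPoly (d : ℕ) where
  V : Finset (EuclideanSpace ℝ (Fin d))
  F : Finset (EuclideanSpace ℝ (Fin d) × ℝ)
  V_nonempty : V.Nonempty
  F_nonempty : F.Nonempty
  norm_normal : ∀ f ∈ F, ‖f.1‖ = 1
  supporting : ∀ f ∈ F, ∀ v ∈ V, (inner ℝ f.1 v : ℝ) ≤ f.2
  facet_vertex : ∀ f ∈ F, ∃ v ∈ V, (inner ℝ f.1 v : ℝ) = f.2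
  simple : ∀ v ∈ V, (F.filter fun f => (inner ℝ f.1 v : ℝ) = f.2).card = d

namespace WPoly

variable {d : ℕ}

/-- The polytope as a set: the convex hull of its vertices. -/
def K (P : WPoly d) : Set (EuclideanSpace ℝ (Fin d)) :=
  convexHull ℝ (P.V : Set (EuclideanSpace ℝ (Fin d)))

/-- `hf f x`: the (signed) distance from `x` to the hyperplane of facet `f`;
it is nonnegative on `K`. -/
def hf (f : EuclideanSpace ℝ (Fin d) × ℝ) (x : EuclideanSpace ℝ (Fin d)) : ℝ :=
  f.2 - (inner ℝ f.1 x : ℝ)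

/-- Vertices incident to facet `f`. -/
def Vf (P : WPoly d) (f : EuclideanSpace ℝ (Fin d) × ℝ) : Finset (EuclideanSpace ℝ (Fin d)) :=
  P.V.filter fun v => (inner ℝ f.1 v : ℝ) = f.2

/-- Facets incident to vertex `v`. -/
def Fv (P : WPoly d) (v : EuclideanSpace ℝ (Fin d)) : Finset (EuclideanSpace ℝ (Fin d) × ℝ) :=
  P.F.filter fun f => (inner ℝ f.1 v : ℝ) = f.2

/-- Diameter of the polytope. -/
def hK (P : WPoly d) : ℝ := Metric.diam P.K

/-- Minimal distance between a vertex and a non-incident facet. -/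
def hstar (P : WPoly d) : ℝ :=
  sInf {r : ℝ | ∃ f ∈ P.F, ∃ v ∈ P.V, v ∉ P.Vf f ∧ hf f v = r}

/-- Generalized barycentric coordinates: nonnegative, partition of unity, linear precision. -/
def IsGBC (P : WPoly d) (φ : EuclideanSpace ℝ (Fin d) → EuclideanSpace ℝ (Fin d) → ℝ) : Prop :=
  (∀ v ∈ P.V, ∀ x ∈ P.K, 0 ≤ φ v x) ∧
  (∀ x ∈ P.K, ∑ v ∈ P.V, φ v x = 1) ∧
  (∀ x ∈ P.K, ∑ v ∈ P.V, φ v x • v = x)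

/-- Wachspress weight function of vertex `v`: `w_v(x) = det(M_v) ∏_{f ∈ F ∖ F_v} h_f(x)`. -/
def wv (P : WPoly d) (detM : EuclideanSpace ℝ (Fin d) → ℝ)
    (v x : EuclideanSpace ℝ (Fin d)) : ℝ :=
  detM v * ∏ f ∈ P.F \ P.Fv v, hf f x

/-- Total Wachspress weight `W = ∑ᵥ wᵥ`. -/
def W (P : WPoly d) (detM : EuclideanSpace ℝ (Fin d) → ℝ)
    (x : EuclideanSpace ℝ (Fin d)) : ℝ :=
  ∑ v ∈ P.V, P.wv detM v x

/-- `detM v` is the determinant of the matrix `M_v` whose columns are the unit outward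
normals of the `d` facets at `v`, ordered so that the determinant is positive. -/
def IsDetM (P : WPoly d) (detM : EuclideanSpace ℝ (Fin d) → ℝ) : Prop :=
  ∀ v ∈ P.V, 0 < detM v ∧ ∃ φ : Fin d → EuclideanSpace ℝ (Fin d) × ℝ,
    Function.Injective φ ∧ (∀ i, φ i ∈ P.Fv v) ∧
    detM v = Matrix.det (Matrix.of fun i j : Fin d => (φ j).1 i)

end WPoly

open WPoly in
/-- If a simple, non-degenerate, convex `d`-polytope admits generalized barycentric
coordinates, then for every `x ∈ K` there are at most `d` facets whose distance to `x` is
strictly less than `h⋆/(d+1)`. -/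
theorem card_close_facets_le (d : ℕ) (P : WPoly d)
    (φ : EuclideanSpace ℝ (Fin d) → EuclideanSpace ℝ (Fin d) → ℝ) (hφ : P.IsGBC φ)
    (x : EuclideanSpace ℝ (Fin d)) (hx : x ∈ P.K) :
    (P.F.filter fun f => hf f x < P.hstar / (d + 1)).card ≤ d := by
  by_contra hcard
  push_neg at hcard
  obtain ⟨hnn, hone, hlin⟩ := hφ
  obtain ⟨S, hSsub, hScard⟩ := Finset.exists_subset_card_eq hcard
  have hSF : ∀ f ∈ S, f ∈ P.F := fun f hf =>
    (Finset.mem_filter.mp (hSsub hf)).1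
  have hSclose : ∀ f ∈ S, hf f x < P.hstar / (d + 1) := fun f hf =>
    (Finset.mem_filter.mp (hSsub hf)).2
  -- nonnegativity of hf on vertices
  have hfv_nonneg : ∀ f ∈ P.F, ∀ v ∈ P.V, 0 ≤ hf f v := by
    intro f hfF v hv
    have := P.supporting f hfF v hv
    simp only [WPoly.hf]; linarith
  have hbdd : BddBelow {r : ℝ | ∃ f ∈ P.F, ∃ v ∈ P.V, v ∉ P.Vf f ∧ hf f v = r} := by
    refine ⟨0, ?_⟩
    rintro r ⟨f, hfF, v, hv, -, rfl⟩
    exact hfv_nonneg f hfF v hv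
  have hstar_le : ∀ f ∈ P.F, ∀ v ∈ P.V, v ∉ P.Vf f → P.hstar ≤ hf f v := by
    intro f hfF v hv hnv
    exact csInf_le hbdd ⟨f, hfF, v, hv, hnv, rfl⟩
  -- linearity of hf through barycentric coordinates
  have key : ∀ f ∈ P.F, hf f x = ∑ v ∈ P.V, φ v x * hf f v := by
    intro f hfF
    have hxeq : (inner ℝ f.1 x : ℝ) = ∑ v ∈ P.V, φ v x * (inner ℝ f.1 v : ℝ) := by
      conv_lhs => rw [← hlin x hx]
      rw [inner_sum]
      exact Finset.sum_congr rfl fun v _ => real_inner_smul_right _ _ _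
    simp only [WPoly.hf, mul_sub]
    rw [Finset.sum_sub_distrib, ← Finset.sum_mul, hone x hx, one_mul, hxeq]
  -- per-vertex lower bound
  have vert_lb : ∀ v ∈ P.V, P.hstar ≤ ∑ f ∈ S, hf f v := by
    intro v hv
    have hex : ∃ f ∈ S, f ∉ P.Fv v := by
      by_contra h
      push_neg at h
      have hsub : S ⊆ P.Fv v := h
      have := Finset.card_le_card hsub
      rw [hScard, WPoly.Fv, P.simple v hv] at this
      omega
    obtain ⟨f, hfS, hfnv⟩ := hex
    have hfF := hSF f hfS
    have hvnVf : v ∉ P.Vf f := by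
      intro hmem
      exact hfnv (Finset.mem_filter.mpr ⟨hfF, (Finset.mem_filter.mp hmem).2⟩)
    calc P.hstar ≤ hf f v := hstar_le f hfF v hv hvnVf
      _ ≤ ∑ f' ∈ S, hf f' v :=
        Finset.single_le_sum (fun f' hf' => hfv_nonneg f' (hSF f' hf') v hv) hfS
  -- combine
  have hSne : S.Nonempty := Finset.card_pos.mp (by omega)
  have upper : ∑ f ∈ S, hf f x < P.hstar := by
    calc ∑ f ∈ S, hf f x < ∑ _f ∈ S, P.hstar / (d + 1) :=
          Finset.sum_lt_sum_of_nonempty hSne hSclose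
      _ = (d + 1) * (P.hstar / (d + 1)) := by
          rw [Finset.sum_const, hScard, Nat.succ_eq_add_one]; push_cast; ring
      _ = P.hstar := by
          field_simp
  have lower : P.hstar ≤ ∑ f ∈ S, hf f x := by
    have h1 : ∑ f ∈ S, hf f x = ∑ v ∈ P.V, φ v x * ∑ f ∈ S, hf f v := by
      rw [Finset.sum_congr rfl fun f hf => key f (hSF f hf), Finset.sum_comm]
      exact Finset.sum_congr rfl fun v _ => (Finset.mul_sum _ _ _).symm
    rw [h1]
    calc P.hstar = ∑ v ∈ P.V, φ v x * P.hstar := by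
          rw [← Finset.sum_mul, hone x hx, one_mul]
      _ ≤ ∑ v ∈ P.V, φ v x * ∑ f ∈ S, hf f v :=
          Finset.sum_le_sum fun v hv =>
            mul_le_mul_of_nonneg_left (vert_lb v hv) (hnn v hv x hx)
  linarith
end
end

section
/- Let K be a simple, non-degenerate, convex d-polytope admitting generalized barycentric coordinates. If x ∈ K and f₁,…,f_k are k ≥ 1 facets with h_{fᵢ}(x) < h⋆/(d+1) for each i, then the facets f₁,…,f_k share a common vertex. -/
open scoped Classical

noncomputable section

open WPoly in
/-- `hf f` is nonnegative on `K`. -/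
lemma hf_nonneg_on_K {d : ℕ} (P : WPoly d) {f : EuclideanSpace ℝ (Fin d) × ℝ}
    (hfF : f ∈ P.F) {y : EuclideanSpace ℝ (Fin d)} (hy : y ∈ P.K) : 0 ≤ hf f y := by
  have hconv : Convex ℝ {z : EuclideanSpace ℝ (Fin d) | (inner ℝ f.1 z : ℝ) ≤ f.2} :=
    convex_halfSpace_le
      ⟨fun a b => inner_add_right _ _ _, fun c a => real_inner_smul_right _ _ _⟩ f.2
  have hsub : (P.V : Set (EuclideanSpace ℝ (Fin d))) ⊆
      {z | (inner ℝ f.1 z : ℝ) ≤ f.2} := fun v hv => P.supporting f hfF v (by exact_mod_cast hv)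
  have := convexHull_min hsub hconv hy
  simpa [WPoly.hf, sub_nonneg] using this

open WPoly in
/-- Barycentric representation of `hf`. -/
lemma hf_eq_sum {d : ℕ} (P : WPoly d)
    (φ : EuclideanSpace ℝ (Fin d) → EuclideanSpace ℝ (Fin d) → ℝ) (hφ : P.IsGBC φ)
    {x : EuclideanSpace ℝ (Fin d)} (hx : x ∈ P.K) (f : EuclideanSpace ℝ (Fin d) × ℝ) :
    hf f x = ∑ v ∈ P.V, φ v x * hf f v := by
  have h1 := hφ.2.1 x hx
  have h2 := hφ.2.2 x hx
  have hin : (inner ℝ f.1 x : ℝ) = ∑ v ∈ P.V, φ v x * (inner ℝ f.1 v : ℝ) := by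
    conv_lhs => rw [← h2]
    rw [inner_sum]
    simp only [real_inner_smul_right]
  calc hf f x = (∑ v ∈ P.V, φ v x) * f.2 - ∑ v ∈ P.V, φ v x * (inner ℝ f.1 v : ℝ) := by
        rw [h1, one_mul, WPoly.hf, hin]
    _ = ∑ v ∈ P.V, (φ v x * f.2 - φ v x * (inner ℝ f.1 v : ℝ)) := by
        rw [Finset.sum_mul, ← Finset.sum_sub_distrib]
    _ = ∑ v ∈ P.V, φ v x * hf f v := by
        refine Finset.sum_congr rfl fun v _ => ?_
        rw [WPoly.hf, mul_sub]

open WPoly in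
/-- If `x ∈ K` and `f₁,…,f_k` (`k ≥ 1`) are facets of a simple, non-degenerate, convex
`d`-polytope with `h_{fᵢ}(x) < h⋆/(d+1)` for each `i`, then these facets share a common
vertex. -/
theorem close_facets_common_vertex (d : ℕ) (P : WPoly d)
    (φ : EuclideanSpace ℝ (Fin d) → EuclideanSpace ℝ (Fin d) → ℝ) (hφ : P.IsGBC φ)
    (x : EuclideanSpace ℝ (Fin d)) (hx : x ∈ P.K)
    (G : Finset (EuclideanSpace ℝ (Fin d) × ℝ)) (hGF : G ⊆ P.F) (hGne : G.Nonempty)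
    (hclose : ∀ f ∈ G, hf f x < P.hstar / (d + 1)) :
    ∃ v ∈ P.V, ∀ f ∈ G, v ∈ P.Vf f := by
  classical
  set S : Set ℝ := {r : ℝ | ∃ f ∈ P.F, ∃ v ∈ P.V, v ∉ P.Vf f ∧ hf f v = r} with hS
  have hSfin : S.Finite := by
    apply Set.Finite.subset
      (Set.Finite.image (fun p : (EuclideanSpace ℝ (Fin d) × ℝ) × EuclideanSpace ℝ (Fin d) =>
        hf p.1 p.2) (P.F ×ˢ P.V).finite_toSet)
    rintro r ⟨f, hfF, v, hvV, -, rfl⟩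
    exact ⟨(f, v), by simp [hfF, hvV], rfl⟩
  obtain ⟨f0, hf0⟩ := hGne
  have hx0 : 0 ≤ hf f0 x := hf_nonneg_on_K P (hGF hf0) hx
  have hd1 : (0 : ℝ) < (d : ℝ) + 1 := by positivity
  have hSne : S.Nonempty := by
    by_contra hemp
    rw [Set.not_nonempty_iff_eq_empty] at hemp
    have hz : P.hstar = 0 := by
      rw [WPoly.hstar, ← hS, hemp, Real.sInf_empty]
    have hcl := hclose f0 hf0
    rw [hz, zero_div] at hcl
    linarith
  have hmem : P.hstar ∈ S := by
    have := hSne.csInf_mem hSfin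
    rwa [WPoly.hstar, ← hS]
  have hstar_pos : 0 < P.hstar := by
    obtain ⟨f, hfF, v, hvV, hvnot, heq⟩ := hmem
    have hle := P.supporting f hfF v hvV
    have hne : (inner ℝ f.1 v : ℝ) ≠ f.2 := fun h => hvnot (Finset.mem_filter.2 ⟨hvV, h⟩)
    rw [← heq, WPoly.hf]
    exact sub_pos.2 (lt_of_le_of_ne hle hne)
  -- key per-facet bound
  have key : ∀ f ∈ G, ∑ v ∈ P.V \ P.Vf f, φ v x < 1 / ((d : ℝ) + 1) := by
    intro f hfG
    have hfF := hGF hfG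
    have hrep := hf_eq_sum P φ hφ hx f
    have h1 : P.hstar * ∑ v ∈ P.V \ P.Vf f, φ v x ≤
        ∑ v ∈ P.V \ P.Vf f, φ v x * hf f v := by
      rw [Finset.mul_sum]
      refine Finset.sum_le_sum fun v hv => ?_
      have hvV : v ∈ P.V := (Finset.mem_sdiff.1 hv).1
      have hvn : v ∉ P.Vf f := (Finset.mem_sdiff.1 hv).2
      have hSm : hf f v ∈ S := ⟨f, hfF, v, hvV, hvn, rfl⟩
      have hge : P.hstar ≤ hf f v := by
        have : sInf S ≤ hf f v := csInf_le hSfin.bddBelow hSm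
        rwa [WPoly.hstar, ← hS]
      have hφnn := hφ.1 v hvV x hx
      calc P.hstar * φ v x = φ v x * P.hstar := mul_comm _ _
        _ ≤ φ v x * hf f v := mul_le_mul_of_nonneg_left hge hφnn
    have h2 : ∑ v ∈ P.V \ P.Vf f, φ v x * hf f v ≤ ∑ v ∈ P.V, φ v x * hf f v := by
      refine Finset.sum_le_sum_of_subset_of_nonneg Finset.sdiff_subset fun v hv _ => ?_
      exact mul_nonneg (hφ.1 v hv x hx)
        (hf_nonneg_on_K P hfF (subset_convexHull ℝ _ (by exact_mod_cast hv)))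
    have h3 := hclose f hfG
    have h4 : P.hstar * ∑ v ∈ P.V \ P.Vf f, φ v x <
        P.hstar * (1 / ((d : ℝ) + 1)) := by
      rw [mul_one_div]
      calc P.hstar * ∑ v ∈ P.V \ P.Vf f, φ v x ≤ hf f x := by rw [hrep]; linarith
        _ < P.hstar / ((d : ℝ) + 1) := by exact_mod_cast h3
    exact lt_of_mul_lt_mul_left h4 (le_of_lt hstar_pos)
  -- common-vertex claim for small facet sets
  have common : ∀ G' : Finset (EuclideanSpace ℝ (Fin d) × ℝ), G' ⊆ G → G'.Nonempty →
      G'.card ≤ d + 1 → ∃ v ∈ P.V, 0 < φ v x ∧ ∀ f ∈ G', v ∈ P.Vf f := by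
    intro G' hG'G hG'ne hG'card
    by_contra hcon
    push_neg at hcon
    have hpt : ∀ v ∈ P.V, φ v x ≤
        ((G'.filter fun f => v ∉ P.Vf f).card : ℝ) * φ v x := by
      intro v hvV
      have hnn := hφ.1 v hvV x hx
      rcases eq_or_lt_of_le hnn with h0 | hpos
      · rw [← h0]; simp
      · obtain ⟨f, hfG', hfn⟩ := hcon v hvV hpos
        have : 1 ≤ (G'.filter fun f => v ∉ P.Vf f).card :=
          Finset.card_pos.2 ⟨f, Finset.mem_filter.2 ⟨hfG', hfn⟩⟩
        have : (1 : ℝ) ≤ ((G'.filter fun f => v ∉ P.Vf f).card : ℝ) := by exact_mod_cast this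
        nlinarith
    have hswap : ∑ f ∈ G', ∑ v ∈ P.V \ P.Vf f, φ v x =
        ∑ v ∈ P.V, ((G'.filter fun f => v ∉ P.Vf f).card : ℝ) * φ v x := by
      have : ∀ f, P.V \ P.Vf f = P.V.filter fun v => v ∉ P.Vf f := fun f =>
        Finset.sdiff_eq_filter P.V (P.Vf f)
      calc ∑ f ∈ G', ∑ v ∈ P.V \ P.Vf f, φ v x
          = ∑ f ∈ G', ∑ v ∈ P.V, if v ∉ P.Vf f then φ v x else 0 := by
            refine Finset.sum_congr rfl fun f _ => ?_
            rw [this f, Finset.sum_filter]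
        _ = ∑ v ∈ P.V, ∑ f ∈ G', if v ∉ P.Vf f then φ v x else 0 := Finset.sum_comm
        _ = ∑ v ∈ P.V, ((G'.filter fun f => v ∉ P.Vf f).card : ℝ) * φ v x := by
            refine Finset.sum_congr rfl fun v _ => ?_
            rw [← Finset.sum_filter, Finset.sum_const, nsmul_eq_mul]
    have hub : ∑ f ∈ G', ∑ v ∈ P.V \ P.Vf f, φ v x <
        (G'.card : ℝ) * (1 / ((d : ℝ) + 1)) := by
      calc ∑ f ∈ G', ∑ v ∈ P.V \ P.Vf f, φ v x
          < ∑ _f ∈ G', 1 / ((d : ℝ) + 1) :=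
            Finset.sum_lt_sum_of_nonempty hG'ne fun f hf => key f (hG'G hf)
        _ = (G'.card : ℝ) * (1 / ((d : ℝ) + 1)) := by rw [Finset.sum_const, nsmul_eq_mul]
    have hcard : (G'.card : ℝ) * (1 / ((d : ℝ) + 1)) ≤ 1 := by
      rw [mul_one_div, div_le_one hd1]
      exact_mod_cast hG'card
    have hone : (1 : ℝ) = ∑ v ∈ P.V, φ v x := (hφ.2.1 x hx).symm
    have : (1 : ℝ) < 1 := by
      calc (1 : ℝ) = ∑ v ∈ P.V, φ v x := hone
        _ ≤ ∑ v ∈ P.V, ((G'.filter fun f => v ∉ P.Vf f).card : ℝ) * φ v x :=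
            Finset.sum_le_sum hpt
        _ = ∑ f ∈ G', ∑ v ∈ P.V \ P.Vf f, φ v x := hswap.symm
        _ < (G'.card : ℝ) * (1 / ((d : ℝ) + 1)) := hub
        _ ≤ 1 := hcard
    exact absurd this (lt_irrefl 1)
  by_cases hc : G.card ≤ d + 1
  · obtain ⟨v, hv, -, hall⟩ := common G (le_refl G) ⟨f0, hf0⟩ hc
    exact ⟨v, hv, hall⟩
  · push_neg at hc
    obtain ⟨G', hG'sub, hG'card⟩ := Finset.exists_subset_card_eq (le_of_lt hc)
    have hG'ne : G'.Nonempty := Finset.card_pos.1 (by omega)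
    obtain ⟨v, hv, -, hall⟩ := common G' hG'sub hG'ne (le_of_eq hG'card)
    have hsubFv : G' ⊆ P.Fv v := fun f hf =>
      Finset.mem_filter.2 ⟨hGF (hG'sub hf), (Finset.mem_filter.1 (hall f hf)).2⟩
    have hle := Finset.card_le_card hsubFv
    have hFv : (P.Fv v).card = d := P.simple v hv
    rw [hG'card, hFv] at hle
    omega
end
end

section
/- For the Wachspress weight W(x) = ∑_{v∈V} det(M_v) ∏_{f∈F∖F_v} h_f(x) on a simple non-degenerate convex d-polytope K, one has W(x) > 0 for all x ∈ K (including boundary points). -/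
open scoped Classical

noncomputable section

open WPoly in
/-- The Wachspress weight `W(x) = ∑_{v∈V} det(M_v) ∏_{f∈F∖F_v} h_f(x)` is strictly
positive everywhere on `K`, including boundary points. -/
theorem W_pos (d : ℕ) (P : WPoly d) (detM : EuclideanSpace ℝ (Fin d) → ℝ)
    (hdetM : P.IsDetM detM) (x : EuclideanSpace ℝ (Fin d)) (hx : x ∈ P.K) :
    0 < P.W detM x := by
  classical
  rw [WPoly.K, Finset.convexHull_eq] at hx
  obtain ⟨w, hw0, hw1, hwx⟩ := hx
  rw [Finset.centerMass_eq_of_sum_1 _ _ hw1] at hwx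
  -- hf f x as a convex combination
  have key : ∀ f ∈ P.F, hf f x = ∑ v ∈ P.V, w v * hf f v := by
    intro f hf'
    have hinner : (inner ℝ f.1 x : ℝ) = ∑ v ∈ P.V, w v * (inner ℝ f.1 v : ℝ) := by
      rw [← hwx, inner_sum]
      exact Finset.sum_congr rfl fun v _ => real_inner_smul_right _ _ _
    simp only [hf, hinner, mul_sub, Finset.sum_sub_distrib, ← Finset.sum_mul, hw1, one_mul]
  have hnonneg : ∀ f ∈ P.F, 0 ≤ hf f x := by
    intro f hf'
    rw [key f hf']
    exact Finset.sum_nonneg fun v hv => mul_nonneg (hw0 v hv)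
      (sub_nonneg.2 (P.supporting f hf' v hv))
  -- choose a vertex with positive weight
  have : ∃ v ∈ P.V, 0 < w v := by
    by_contra h
    push_neg at h
    have : ∑ v ∈ P.V, w v ≤ 0 :=
      Finset.sum_nonpos fun v hv => h v hv
    linarith [hw1 ▸ this]
  obtain ⟨v0, hv0V, hv0w⟩ := this
  -- every facet touching x contains v0
  have hface : ∀ f ∈ P.F, hf f x = 0 → f ∈ P.Fv v0 := by
    intro f hfF hfx
    have hz : ∑ v ∈ P.V, w v * hf f v = 0 := by rw [← key f hfF, hfx]
    have hterm : w v0 * hf f v0 = 0 := by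
      have := (Finset.sum_eq_zero_iff_of_nonneg (fun v hv =>
        mul_nonneg (hw0 v hv) (sub_nonneg.2 (P.supporting f hfF v hv)))).1 hz v0 hv0V
      exact this
    have : hf f v0 = 0 := by
      rcases mul_eq_zero.1 hterm with h | h
      · exact absurd h (ne_of_gt hv0w)
      · exact h
    simp only [WPoly.Fv, Finset.mem_filter]
    refine ⟨hfF, ?_⟩
    simp only [hf] at this
    linarith
  -- v0's term is positive
  have hpos : 0 < P.wv detM v0 x := by
    refine mul_pos (hdetM v0 hv0V).1 (Finset.prod_pos ?_)
    intro f hfm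
    rw [Finset.mem_sdiff] at hfm
    rcases lt_or_eq_of_le (hnonneg f hfm.1) with h | h
    · exact h
    · exact absurd (hface f hfm.1 h.symm) hfm.2
  -- all terms nonneg
  refine Finset.sum_pos' (fun v hv => ?_) ⟨v0, hv0V, hpos⟩
  exact mul_nonneg (le_of_lt (hdetM v hv).1)
    (Finset.prod_nonneg fun f hfm => hnonneg f (Finset.mem_sdiff.1 hfm).1)
end
end

section
/- Let K be a non-degenerate convex polygon in ℝ² with h⋆ ≥ C⋆ h_K. Then every interior angle θ of K satisfies sin θ ≥ C⋆; in particular all interior angles lie in [arcsin C⋆, π − arcsin C⋆]. -/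
noncomputable section

/-- The planar cross product `a₀b₁ − a₁b₀`. -/
def cross2 (a b : EuclideanSpace ℝ (Fin 2)) : ℝ := a 0 * b 1 - a 1 * b 0

open Metric Real EuclideanGeometry

lemma arcsin_le_of_sin_ge {C φ : ℝ} (h0 : 0 ≤ φ) (hπ : φ ≤ Real.pi)
    (h : C ≤ Real.sin φ) : Real.arcsin C ≤ φ := by
  rcases le_or_gt φ (Real.pi / 2) with hle | hlt
  · calc Real.arcsin C ≤ Real.arcsin (Real.sin φ) := Real.monotone_arcsin h
      _ = φ := Real.arcsin_sin (by linarith [Real.pi_pos]) hle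
  · exact le_trans (Real.arcsin_le_pi_div_two C) hlt.le

lemma infDist_le_dist_mul_sin (A B C : EuclideanSpace ℝ (Fin 2)) (hAB : A ≠ B) :
    Metric.infDist C (affineSpan ℝ {A, B} : Set (EuclideanSpace ℝ (Fin 2)))
      ≤ dist B C * Real.sin (EuclideanGeometry.angle A B C) := by
  set u := A - B with hu_def
  set w := C - B with hw_def
  have hu : u ≠ 0 := sub_ne_zero.mpr hAB
  have hu2 : (0:ℝ) < ‖u‖ ^ 2 := by
    have := norm_pos_iff.mpr hu
    positivity
  set t : ℝ := (inner ℝ w u : ℝ) / ‖u‖ ^ 2 with ht_def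
  have hmem : B + t • u ∈ (affineSpan ℝ {A, B} : Set (EuclideanSpace ℝ (Fin 2))) := by
    have h1 := AffineMap.lineMap_mem_affineSpan_pair (k := ℝ) t B A
    rw [Set.pair_comm]
    have : AffineMap.lineMap B A t = B + t • u := by
      simp [AffineMap.lineMap_apply, hu_def, vsub_eq_sub, vadd_eq_add, add_comm]
    rwa [this] at h1
  have key : ‖w - t • u‖ = dist B C * Real.sin (EuclideanGeometry.angle A B C) := by
    have hangle : EuclideanGeometry.angle A B C = InnerProductGeometry.angle u w := by
      rw [EuclideanGeometry.angle, vsub_eq_sub, vsub_eq_sub]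
    have hsin := InnerProductGeometry.sin_angle_mul_norm_mul_norm u w
    have hsin_nonneg : 0 ≤ Real.sin (InnerProductGeometry.angle u w) :=
      Real.sin_nonneg_of_nonneg_of_le_pi (InnerProductGeometry.angle_nonneg u w)
        (InnerProductGeometry.angle_le_pi u w)
    have hCS : (inner ℝ u w : ℝ) * inner ℝ u w ≤ (inner ℝ u u : ℝ) * inner ℝ w w :=
      real_inner_mul_inner_self_le u w
    have hsq : (Real.sin (InnerProductGeometry.angle u w) * (‖u‖ * ‖w‖)) ^ 2
        = (inner ℝ u u : ℝ) * inner ℝ w w - (inner ℝ u w : ℝ) * inner ℝ u w := by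
      rw [hsin, Real.sq_sqrt (by linarith)]
    have huu : (inner ℝ u u : ℝ) = ‖u‖ ^ 2 := real_inner_self_eq_norm_sq u
    have hww : (inner ℝ w w : ℝ) = ‖w‖ ^ 2 := real_inner_self_eq_norm_sq w
    have hwu : (inner ℝ w u : ℝ) = (inner ℝ u w : ℝ) := real_inner_comm u w
    have hexp : ‖w - t • u‖ ^ 2 = ‖w‖ ^ 2 - (inner ℝ u w : ℝ) ^ 2 / ‖u‖ ^ 2 := by
      rw [norm_sub_sq_real, real_inner_smul_right, norm_smul, Real.norm_eq_abs, mul_pow]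
      rw [ht_def, hwu]
      have : (|((inner ℝ u w : ℝ) / ‖u‖ ^ 2)|) ^ 2 = ((inner ℝ u w : ℝ) / ‖u‖ ^ 2) ^ 2 :=
        sq_abs _
      rw [this]
      field_simp
      ring
    have hdist : dist B C = ‖w‖ := by rw [dist_eq_norm, hw_def, norm_sub_rev]
    have hsq2 : ‖w - t • u‖ ^ 2
        = (‖w‖ * Real.sin (InnerProductGeometry.angle u w)) ^ 2 := by
      have h1 : (Real.sin (InnerProductGeometry.angle u w)) ^ 2 * (‖u‖ ^ 2 * ‖w‖ ^ 2)
          = ‖u‖ ^ 2 * ‖w‖ ^ 2 - (inner ℝ u w : ℝ) ^ 2 := by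
        nlinarith [hsq]
      rw [hexp]
      have hne : ‖u‖ ^ 2 ≠ 0 := ne_of_gt hu2
      have h2 : (‖w‖ * Real.sin (InnerProductGeometry.angle u w)) ^ 2
          = (‖u‖ ^ 2 * ‖w‖ ^ 2 - (inner ℝ u w : ℝ) ^ 2) / ‖u‖ ^ 2 := by
        rw [eq_div_iff hne]
        linear_combination h1
      rw [h2]
      field_simp
    rw [hangle, hdist]
    have := Real.sqrt_sq (norm_nonneg (w - t • u))
    rw [← this, hsq2, Real.sqrt_sq (by positivity)]
  calc Metric.infDist C (affineSpan ℝ {A, B} : Set (EuclideanSpace ℝ (Fin 2)))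
      ≤ dist C (B + t • u) := Metric.infDist_le_dist_of_mem hmem
    _ = ‖w - t • u‖ := by
        rw [dist_eq_norm]; congr 1; rw [hw_def]; abel
    _ = _ := key

/-- **Angle bounds for shape-regular polygons.** Let `K` be a non-degenerate convex
polygon with vertices `v₀, …, v_{n−1}` in counterclockwise order (strict convexity is
expressed by positivity of consecutive edge cross products), diameter `h_K`, and `h⋆` the
minimal distance from a vertex to the line of a non-incident edge. If `h⋆ ≥ C⋆ h_K` with
`C⋆ > 0`, then every interior angle `θᵢ = ∠(v_{i−1}, vᵢ, v_{i+1})` satisfies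
`sin θᵢ ≥ C⋆`; in particular `θᵢ ∈ [arcsin C⋆, π − arcsin C⋆]`. -/
theorem interior_angle_bounds (n : ℕ) [NeZero n] (hn : 3 ≤ n)
    (v : ZMod n → EuclideanSpace ℝ (Fin 2))
    (hconv : ∀ i : ZMod n, 0 < cross2 (v (i + 1) - v i) (v (i + 2) - v (i + 1)))
    (hK : ℝ) (hKdef : hK = Metric.diam (Set.range v))
    (hstar : ℝ)
    (hstardef : hstar = sInf {r : ℝ | ∃ i j : ZMod n, j ≠ i ∧ j ≠ i + 1 ∧
      r = Metric.infDist (v j)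
        (affineSpan ℝ {v i, v (i + 1)} : Set (EuclideanSpace ℝ (Fin 2)))})
    (Cs : ℝ) (hCs : 0 < Cs) (hgeo : Cs * hK ≤ hstar) :
    ∀ i : ZMod n,
      Cs ≤ Real.sin (EuclideanGeometry.angle (v (i - 1)) (v i) (v (i + 1))) ∧
      Real.arcsin Cs ≤ EuclideanGeometry.angle (v (i - 1)) (v i) (v (i + 1)) ∧
      EuclideanGeometry.angle (v (i - 1)) (v i) (v (i + 1)) ≤ Real.pi - Real.arcsin Cs := by
  intro i
  set θ := EuclideanGeometry.angle (v (i - 1)) (v i) (v (i + 1)) with hθ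
  have hidx1 : i - 1 + 1 = i := by ring
  have hidx2 : i - 1 + 2 = i + 1 := by ring
  have hc := hconv (i - 1)
  rw [hidx1, hidx2] at hc
  -- adjacent vertices distinct
  have ha : v i - v (i - 1) ≠ 0 := by
    intro h; rw [h] at hc; simp [cross2] at hc
  have hb : v (i + 1) - v i ≠ 0 := by
    intro h; rw [h] at hc; simp [cross2] at hc
  have hAB : v (i - 1) ≠ v i := fun h => ha (by rw [h]; simp)
  have hBC : v i ≠ v (i + 1) := fun h => hb (by rw [h]; simp)
  -- diameter bounds
  have hbd : Bornology.IsBounded (Set.range v) := (Set.finite_range v).isBounded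
  have hd : dist (v i) (v (i + 1)) ≤ hK := by
    rw [hKdef]
    exact Metric.dist_le_diam_of_mem hbd ⟨i, rfl⟩ ⟨i + 1, rfl⟩
  have hdpos : 0 < dist (v i) (v (i + 1)) := dist_pos.mpr hBC
  have hKpos : 0 < hK := lt_of_lt_of_le hdpos hd
  -- characters of ZMod n
  have h2ne : (2 : ZMod n) ≠ 0 := by
    intro h
    have : ((2 : ℕ) : ZMod n) = 0 := by exact_mod_cast h
    rw [ZMod.natCast_eq_zero_iff] at this
    exact absurd (Nat.le_of_dvd (by norm_num) this) (by omega)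
  have h1ne : (1 : ZMod n) ≠ 0 := by
    intro h
    have : ((1 : ℕ) : ZMod n) = 0 := by exact_mod_cast h
    rw [ZMod.natCast_eq_zero_iff] at this
    exact absurd (Nat.le_of_dvd (by norm_num) this) (by omega)
  -- hstar ≤ the relevant point-line distance
  set S := {r : ℝ | ∃ i j : ZMod n, j ≠ i ∧ j ≠ i + 1 ∧
      r = Metric.infDist (v j)
        (affineSpan ℝ {v i, v (i + 1)} : Set (EuclideanSpace ℝ (Fin 2)))} with hS
  have hbdd : BddBelow S := by
    refine ⟨0, fun r hr => ?_⟩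
    obtain ⟨a, b, -, -, rfl⟩ := hr
    exact Metric.infDist_nonneg
  have hmemS : Metric.infDist (v (i + 1))
      (affineSpan ℝ {v (i - 1), v i} : Set (EuclideanSpace ℝ (Fin 2))) ∈ S := by
    refine ⟨i - 1, i + 1, ?_, ?_, ?_⟩
    · intro h
      exact h2ne (by linear_combination h)
    · rw [hidx1]
      intro h
      exact h1ne (by linear_combination h)
    · rw [hidx1]
  have hstar_le : hstar ≤ Metric.infDist (v (i + 1))
      (affineSpan ℝ {v (i - 1), v i} : Set (EuclideanSpace ℝ (Fin 2))) := by
    rw [hstardef]; exact csInf_le hbdd hmemS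
  have hline := infDist_le_dist_mul_sin (v (i - 1)) (v i) (v (i + 1)) hAB
  have hθ0 : 0 ≤ θ := EuclideanGeometry.angle_nonneg _ _ _
  have hθpi : θ ≤ Real.pi := EuclideanGeometry.angle_le_pi _ _ _
  have hsin_nonneg : 0 ≤ Real.sin θ :=
    Real.sin_nonneg_of_nonneg_of_le_pi hθ0 hθpi
  have hchain : Cs * hK ≤ hK * Real.sin θ := by
    calc Cs * hK ≤ hstar := hgeo
      _ ≤ _ := hstar_le
      _ ≤ dist (v i) (v (i + 1)) * Real.sin θ := hline
      _ ≤ hK * Real.sin θ := mul_le_mul_of_nonneg_right hd hsin_nonneg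
  have hsin : Cs ≤ Real.sin θ := by
    rw [mul_comm Cs hK] at hchain
    exact le_of_mul_le_mul_left hchain hKpos
  refine ⟨hsin, arcsin_le_of_sin_ge hθ0 hθpi hsin, ?_⟩
  have h2 : Real.arcsin Cs ≤ Real.pi - θ :=
    arcsin_le_of_sin_ge (by linarith) (by linarith [Real.pi_pos, hθ0])
      (by rw [Real.sin_pi_sub]; exact hsin)
  linarith
end
end
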